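/- On the kernel K(x,dy) with density k(x,y) = (e/2)·((1−e^{−x})/(1−e^{−y}))·(1/x)·e^{−y/x} for y ≥ x > 0 (completed below the diagonal so that K is a martingale kernel), the function M(x) = x(1 − e^{−x}) solves M(x) = ∫_x^∞ M(y) k(x,y) dy for all x > 0, and more generally M_λ(x) = λx(1 − e^{−x}) is a solution for every λ ∈ [0,1]; moreover ∫_x^∞ k(x,y)dy < 1/2 for all x > 0, so a(x) = K(x,[0,x)) ≥ 1/2. -/

import Mathlib

open MeasureTheory Filter Set Topology

noncomputable section

/-- The density `k(x,y) = (e/2)·((1-e^{-x})/(1-e^{-y}))·(1/x)·e^{-y/x}` (for `y ≥ x > 0`). -/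
def exKernelDensity (x y : ℝ) : ℝ :=
  (Real.exp 1 / 2) * ((1 - Real.exp (-x)) / (1 - Real.exp (-y))) * (1 / x) * Real.exp (-y / x)

lemma hasDerivAt_exp_neg_div (x y : ℝ) (hx : x ≠ 0) :
    HasDerivAt (fun y : ℝ => Real.exp (-y / x)) (Real.exp (-y / x) * (-1 / x)) y := by
  have h : HasDerivAt (fun y : ℝ => -y / x) (-1 / x) y := by
    simpa using ((hasDerivAt_id y).neg.div_const x)
  exact (Real.hasDerivAt_exp (-y / x)).comp y h

lemma tendsto_aux (x : ℝ) (hx : 0 < x) (a b : ℝ) :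
    Tendsto (fun y : ℝ => (a * y + b) * Real.exp (-y / x)) atTop (𝓝 0) := by
  have hdiv : Tendsto (fun y : ℝ => y / x) atTop atTop :=
    tendsto_id.atTop_div_const hx
  have h1 : Tendsto (fun t : ℝ => (a * (x * t) + b) * Real.exp (-t)) atTop (𝓝 0) := by
    have hp := Real.tendsto_pow_mul_exp_neg_atTop_nhds_zero 1
    simp only [pow_one] at hp
    have he := Real.tendsto_exp_neg_atTop_nhds_zero
    have := ((hp.const_mul (a * x)).add (he.const_mul b))
    simp only [mul_zero, add_zero] at this
    refine this.congr fun t => by ring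
  have := h1.comp hdiv
  refine this.congr fun y => ?_
  simp only [Function.comp_apply]
  rw [mul_div_cancel₀ _ (ne_of_gt hx)]
  ring_nf

/-- `∫_x^∞ e^{-y/x} dy = x e^{-1}`, with integrability. -/
lemma exp_int (x : ℝ) (hx : 0 < x) :
    IntegrableOn (fun y : ℝ => Real.exp (-y / x)) (Ioi x) ∧
      (∫ y in Ioi x, Real.exp (-y / x)) = x * Real.exp (-1) := by
  have hderiv : ∀ y ∈ Ici x, HasDerivAt (fun y : ℝ => -x * Real.exp (-y / x))
      (Real.exp (-y / x)) y := by
    intro y _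
    have := (hasDerivAt_exp_neg_div x y (ne_of_gt hx)).const_mul (-x)
    convert this using 1
    · rfl
    · rfl
    have hx0 : x * x⁻¹ = 1 := mul_inv_cancel₀ (ne_of_gt hx)
    linear_combination (-Real.exp (-y / x)) * hx0
  have hpos : ∀ y ∈ Ioi x, 0 ≤ Real.exp (-y / x) := fun y _ => (Real.exp_pos _).le
  have htend : Tendsto (fun y : ℝ => -x * Real.exp (-y / x)) atTop (𝓝 0) := by
    have := tendsto_aux x hx 0 (-x)
    refine this.congr fun y => by ring
  refine ⟨integrableOn_Ioi_deriv_of_nonneg' hderiv hpos htend, ?_⟩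
  have := integral_Ioi_of_hasDerivAt_of_nonneg' hderiv hpos htend
  rw [this]
  rw [neg_div, div_self (ne_of_gt hx)]
  ring

/-- `∫_x^∞ y e^{-y/x} dy = 2 x² e^{-1}`. -/
lemma lin_int (x : ℝ) (hx : 0 < x) :
    (∫ y in Ioi x, y * Real.exp (-y / x)) = 2 * x ^ 2 * Real.exp (-1) := by
  have hderiv : ∀ y ∈ Ici x, HasDerivAt (fun y : ℝ => -(x * y + x ^ 2) * Real.exp (-y / x))
      (y * Real.exp (-y / x)) y := by
    intro y _
    have h1 : HasDerivAt (fun y : ℝ => -(x * y + x ^ 2)) (-x) y := by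
      have h := (((hasDerivAt_id y).const_mul x).add_const (x ^ 2)).neg
      rw [mul_one] at h
      exact h
    have := h1.mul (hasDerivAt_exp_neg_div x y (ne_of_gt hx))
    convert this using 1
    · rfl
    · rfl
    · rfl
    have hx0 : x * x⁻¹ = 1 := mul_inv_cancel₀ (ne_of_gt hx)
    linear_combination (-(y + x) * Real.exp (-y / x)) * hx0
  have hpos : ∀ y ∈ Ioi x, 0 ≤ y * Real.exp (-y / x) := by
    intro y hy
    exact mul_nonneg (le_of_lt (lt_trans hx hy)) (Real.exp_pos _).le
  have htend : Tendsto (fun y : ℝ => -(x * y + x ^ 2) * Real.exp (-y / x)) atTop (𝓝 0) := by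
    have := tendsto_aux x hx (-x) (-x ^ 2)
    refine this.congr fun y => by ring
  have := integral_Ioi_of_hasDerivAt_of_nonneg' hderiv hpos htend
  rw [this]
  rw [neg_div, div_self (ne_of_gt hx)]
  ring

/-- For the density `k(x,y)` above, every function
`M_λ(x) = λ·x·(1 - e^{-x})`, `λ ∈ [0,1]`, solves the Volterra equation
`M(x) = ∫_x^∞ M(y) k(x,y) dy` for all `x > 0`; moreover `∫_x^∞ k(x,y) dy < 1/2`,
so the downward-move probability satisfies `a(x) ≥ 1/2`. -/
theorem exKernelDensity_volterra_solutions :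
    ∀ x : ℝ, 0 < x →
      (∀ lam ∈ Set.Icc (0 : ℝ) 1,
        lam * x * (1 - Real.exp (-x)) =
          ∫ y in Set.Ici x, lam * y * (1 - Real.exp (-y)) * exKernelDensity x y) ∧
      (∫ y in Set.Ici x, exKernelDensity x y) < 1 / 2 := by
  intro x hx
  have hxne : x ≠ 0 := ne_of_gt hx
  have hone : ∀ y : ℝ, x ≤ y → Real.exp (-y) < 1 := by
    intro y hy
    exact Real.exp_lt_one_iff.mpr (by linarith)
  have hdenpos : ∀ y : ℝ, x ≤ y → 0 < 1 - Real.exp (-y) := by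
    intro y hy; linarith [hone y hy]
  constructor
  · intro lam _
    have hcongr : ∀ y ∈ Ici x,
        lam * y * (1 - Real.exp (-y)) * exKernelDensity x y =
          (lam * (Real.exp 1 / 2) * (1 - Real.exp (-x)) * (1 / x)) *
            (y * Real.exp (-y / x)) := by
      intro y hy
      have h : (1 : ℝ) - Real.exp (-y) ≠ 0 := ne_of_gt (hdenpos y hy)
      unfold exKernelDensity
      field_simp
    rw [setIntegral_congr_fun measurableSet_Ici hcongr, integral_const_mul,
      MeasureTheory.integral_Ici_eq_integral_Ioi, lin_int x hx]
    rw [Real.exp_neg 1]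
    have h1 : Real.exp 1 ≠ 0 := Real.exp_ne_zero 1
    field_simp
  · set c : ℝ := Real.exp 1 / 2 * (1 / x) with hc
    have hcpos : 0 < c := by positivity
    set g : ℝ → ℝ := fun y => c * Real.exp (-y / x) with hg
    have hgint : IntegrableOn g (Ioi x) := ((exp_int x hx).1.const_mul c)
    have hgval : (∫ y in Ioi x, g y) = 1 / 2 := by
      rw [hg]
      simp only
      rw [integral_const_mul, (exp_int x hx).2, hc, Real.exp_neg 1]
      have h1 : Real.exp 1 ≠ 0 := Real.exp_ne_zero 1
      field_simp
    -- pointwise bounds on Ioi x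
    have hflt : ∀ y ∈ Ioi x, exKernelDensity x y < g y := by
      intro y hy
      have hy' : x ≤ y := le_of_lt hy
      have hdy := hdenpos y hy'
      have hdx := hdenpos x le_rfl
      have hratio : (1 - Real.exp (-x)) / (1 - Real.exp (-y)) < 1 := by
        rw [div_lt_one hdy]
        have : Real.exp (-y) < Real.exp (-x) := Real.exp_lt_exp.mpr (by simp only [Set.mem_Ioi] at hy; linarith)
        linarith
      have hratio0 : 0 < (1 - Real.exp (-x)) / (1 - Real.exp (-y)) := div_pos hdx hdy
      unfold exKernelDensity
      rw [hg, hc]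
      have hE : 0 < Real.exp 1 / 2 * (1 / x) * Real.exp (-y / x) := by positivity
      calc Real.exp 1 / 2 * ((1 - Real.exp (-x)) / (1 - Real.exp (-y))) * (1 / x) *
            Real.exp (-y / x)
          = ((1 - Real.exp (-x)) / (1 - Real.exp (-y))) *
            (Real.exp 1 / 2 * (1 / x) * Real.exp (-y / x)) := by ring
        _ < 1 * (Real.exp 1 / 2 * (1 / x) * Real.exp (-y / x)) := by
            exact mul_lt_mul_of_pos_right hratio hE
        _ = Real.exp 1 / 2 * (1 / x) * Real.exp (-y / x) := by ring
    have hfnonneg : ∀ y ∈ Ioi x, 0 ≤ exKernelDensity x y := by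
      intro y hy
      have hdy := hdenpos y (le_of_lt hy)
      have hdx := hdenpos x le_rfl
      unfold exKernelDensity
      positivity
    -- measurability of f on Ioi x
    have hfcont : ContinuousOn (fun y => exKernelDensity x y) (Ioi x) := by
      unfold exKernelDensity
      refine ContinuousOn.mul (ContinuousOn.mul (ContinuousOn.mul continuousOn_const ?_)
        continuousOn_const) ?_
      · exact ContinuousOn.div continuousOn_const
          (Continuous.continuousOn (by continuity))
          (fun y hy => ne_of_gt (hdenpos y (le_of_lt hy)))
      · exact Continuous.continuousOn (by continuity)
    have hfmeas : AEStronglyMeasurable (fun y => exKernelDensity x y)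
        (volume.restrict (Ioi x)) :=
      hfcont.aestronglyMeasurable measurableSet_Ioi
    have hfint : IntegrableOn (fun y => exKernelDensity x y) (Ioi x) := by
      refine Integrable.mono' hgint hfmeas ?_
      filter_upwards [ae_restrict_mem measurableSet_Ioi] with y hy
      rw [Real.norm_eq_abs, abs_of_nonneg (hfnonneg y hy)]
      exact le_of_lt (hflt y hy)
    -- positivity of the difference integral
    have hdiffint : IntegrableOn (fun y => g y - exKernelDensity x y) (Ioi x) :=
      hgint.sub hfint
    have hdiffpos : 0 < ∫ y in Ioi x, (g y - exKernelDensity x y) := by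
      rw [setIntegral_pos_iff_support_of_nonneg_ae ?_ hdiffint]
      · have hsub : Ioi x ⊆ Function.support (fun y => g y - exKernelDensity x y) ∩ Ioi x := by
          intro y hy
          refine ⟨?_, hy⟩
          simp only [Function.mem_support]
          have := hflt y hy
          intro h; linarith [sub_eq_zero.mp h ▸ this]
        calc (0 : ENNReal) < volume (Ioi x) := by
              simp [Real.volume_Ioi]
          _ ≤ volume (Function.support (fun y => g y - exKernelDensity x y) ∩ Ioi x) := by
              exact le_of_eq (by
                congr 1
                refine le_antisymm (fun y hy => ?_) (fun y hy => hy.2)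
                exact hsub hy)
      · filter_upwards [ae_restrict_mem measurableSet_Ioi] with y hy
        have := hflt y hy
        simp only [Pi.zero_apply]
        linarith
    have hsplit : (∫ y in Ioi x, exKernelDensity x y) =
        (∫ y in Ioi x, g y) - ∫ y in Ioi x, (g y - exKernelDensity x y) := by
      rw [integral_sub hgint hfint]
      ring
    rw [MeasureTheory.integral_Ici_eq_integral_Ioi, hsplit, hgval]
    linarith

end
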